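/- For any permutation group G on n letters and any integer 1 ≤ t ≤ n/2, the number of orbits on (t−1)-element subsets is at most the number of orbits on t-element subsets: s_{t−1}(G) ≤ s_t(G). -/
import Mathlib


open Pointwise

/-- The number of orbits of `G ≤ Sₙ` on the powerset of `{1,...,n}`. -/
noncomputable def setOrbitCount (n : ℕ) (G : Subgroup (Equiv.Perm (Fin n))) : ℕ :=
  Nat.card (Quotient (MulAction.orbitRel G (Finset (Fin n))))

/-- The common cardinality of the sets in an orbit. -/
noncomputable def orbitCard (n : ℕ) (G : Subgroup (Equiv.Perm (Fin n))) :
    Quotient (MulAction.orbitRel G (Finset (Fin n))) → ℕ :=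
  Quotient.lift Finset.card (by
    rintro X Y ⟨g, rfl⟩
    exact Finset.card_smul_finset g Y)

/-- `s_t(G)`: the number of orbits of `G` on the `t`-element subsets of `{1,...,n}`. -/
noncomputable def tSetOrbitCount (n : ℕ) (G : Subgroup (Equiv.Perm (Fin n))) (t : ℕ) : ℕ :=
  Nat.card {q : Quotient (MulAction.orbitRel G (Finset (Fin n))) // orbitCard n G q = t}

namespace LWaux

variable {n : ℕ}

/-- The "up" operator: `(upMap f) Z` sums `f` over the subsets of `Z` missing one point. -/
def upMap (f : Finset (Fin n) → ℚ) : Finset (Fin n) → ℚ :=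
  fun Z => ∑ x ∈ Z, f (Z.erase x)

/-- The "down" (adjoint) operator. -/
def downMap (f : Finset (Fin n) → ℚ) : Finset (Fin n) → ℚ :=
  fun Y => ∑ x ∈ Yᶜ, f (insert x Y)

lemma adjoint (f g : Finset (Fin n) → ℚ) :
    ∑ Z, upMap f Z * g Z = ∑ Y, f Y * downMap g Y := by
  simp only [upMap, downMap, Finset.sum_mul, Finset.mul_sum]
  rw [show (∑ Z : Finset (Fin n), ∑ x ∈ Z, f (Z.erase x) * g Z)
      = ∑ p ∈ (Finset.univ.sigma fun Z : Finset (Fin n) => Z),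
          f (p.1.erase p.2) * g p.1 from
        (Finset.sum_sigma Finset.univ (fun Z => Z) (fun p => f (p.1.erase p.2) * g p.1)).symm,
    show (∑ Y : Finset (Fin n), ∑ x ∈ Yᶜ, f Y * g (insert x Y))
      = ∑ p ∈ (Finset.univ.sigma fun Y : Finset (Fin n) => Yᶜ),
          f p.1 * g (insert p.2 p.1) from
        (Finset.sum_sigma Finset.univ (fun Y => Yᶜ) (fun p => f p.1 * g (insert p.2 p.1))).symm]
  apply Finset.sum_nbij' (fun p => ⟨p.1.erase p.2, p.2⟩) (fun p => ⟨insert p.2 p.1, p.2⟩)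
  · rintro ⟨Z, x⟩ h
    simp only [Finset.mem_sigma, Finset.mem_univ, true_and] at h ⊢
    simp [h]
  · rintro ⟨Y, x⟩ h
    simp only [Finset.mem_sigma, Finset.mem_univ, true_and] at h ⊢
    simp
  · rintro ⟨Z, x⟩ h
    simp only [Finset.mem_sigma, Finset.mem_univ, true_and] at h
    simp [Finset.insert_erase h]
  · rintro ⟨Y, x⟩ h
    simp only [Finset.mem_sigma, Finset.mem_univ, true_and, Finset.mem_compl] at h
    simp [Finset.erase_insert h]
  · rintro ⟨Z, x⟩ h
    simp only [Finset.mem_sigma, Finset.mem_univ, true_and] at h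
    rw [Finset.insert_erase h]

lemma du_comm (f : Finset (Fin n) → ℚ) (Y : Finset (Fin n)) :
    downMap (upMap f) Y = upMap (downMap f) Y + ((n : ℚ) - 2 * Y.card) * f Y := by
  have h1 : downMap (upMap f) Y
      = (Yᶜ.card : ℚ) * f Y + ∑ x ∈ Yᶜ, ∑ y ∈ Y, f (insert x (Y.erase y)) := by
    unfold downMap upMap
    have : ∀ x ∈ Yᶜ, ∑ y ∈ insert x Y, f ((insert x Y).erase y)
        = f Y + ∑ y ∈ Y, f (insert x (Y.erase y)) := by
      intro x hx
      rw [Finset.mem_compl] at hx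
      rw [Finset.sum_insert hx, Finset.erase_insert hx]
      congr 1
      apply Finset.sum_congr rfl
      intro y hy
      rw [Finset.erase_insert_of_ne]
      rintro rfl; exact hx hy
    rw [Finset.sum_congr rfl this, Finset.sum_add_distrib, Finset.sum_const, nsmul_eq_mul]
  have h2 : upMap (downMap f) Y
      = (Y.card : ℚ) * f Y + ∑ y ∈ Y, ∑ x ∈ Yᶜ, f (insert x (Y.erase y)) := by
    unfold upMap downMap
    have : ∀ y ∈ Y, ∑ x ∈ (Y.erase y)ᶜ, f (insert x (Y.erase y))
        = f Y + ∑ x ∈ Yᶜ, f (insert x (Y.erase y)) := by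
      intro y hy
      have hc : (Y.erase y)ᶜ = insert y Yᶜ := by
        ext z
        simp only [Finset.mem_compl, Finset.mem_erase, Finset.mem_insert]
        by_cases hz : z = y <;> simp [hz]
      rw [hc, Finset.sum_insert (by simp [hy]), Finset.insert_erase hy]
    rw [Finset.sum_congr rfl this, Finset.sum_add_distrib, Finset.sum_const, nsmul_eq_mul]
  rw [h1, h2, Finset.sum_comm]
  have hcard : (Yᶜ.card : ℚ) = (n : ℚ) - Y.card := by
    have hle : Y.card ≤ n := by simpa using Finset.card_le_univ Y
    rw [Finset.card_compl, Fintype.card_fin, Nat.cast_sub hle]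
  rw [hcard]; ring

/-- Injectivity of the up operator on functions supported on `k`-sets, for `2k < n`. -/
lemma upMap_injective_on_level {k : ℕ} (hk : 2 * k < n) (f : Finset (Fin n) → ℚ)
    (hsupp : ∀ X : Finset (Fin n), X.card ≠ k → f X = 0)
    (hU : ∀ Z, upMap f Z = 0) : ∀ X, f X = 0 := by
  have key : (0:ℚ) = (∑ Y, downMap f Y * downMap f Y) + ((n:ℚ) - 2*k) * ∑ Y, f Y * f Y := by
    have h0 : ∑ Z, upMap f Z * upMap f Z = 0 := by
      apply Finset.sum_eq_zero; intro Z _; rw [hU Z]; ring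
    rw [adjoint f (upMap f)] at h0
    have h1 : ∀ Y : Finset (Fin n), f Y * downMap (upMap f) Y
        = f Y * upMap (downMap f) Y + ((n:ℚ) - 2*k) * (f Y * f Y) := by
      intro Y
      rw [du_comm]
      by_cases hY : Y.card = k
      · rw [hY]; ring
      · rw [hsupp Y hY]; ring
    rw [Finset.sum_congr rfl (fun Y _ => h1 Y), Finset.sum_add_distrib] at h0
    have e1 : ∑ Y : Finset (Fin n), f Y * upMap (downMap f) Y
        = ∑ Y : Finset (Fin n), downMap f Y * downMap f Y := by
      calc ∑ Y : Finset (Fin n), f Y * upMap (downMap f) Y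
          = ∑ Y : Finset (Fin n), upMap (downMap f) Y * f Y :=
            Finset.sum_congr rfl fun Y _ => mul_comm _ _
        _ = _ := adjoint _ _
    have e2 : ∑ Y : Finset (Fin n), ((n:ℚ) - 2*k) * (f Y * f Y)
        = ((n:ℚ) - 2*k) * ∑ Y : Finset (Fin n), f Y * f Y := by rw [Finset.mul_sum]
    rw [e1, e2] at h0
    linarith
  have hpos : (0:ℚ) < (n:ℚ) - 2*k := by
    have : (2*k : ℚ) < n := by exact_mod_cast hk
    linarith
  have hA : (0:ℚ) ≤ ∑ Y, downMap f Y * downMap f Y :=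
    Finset.sum_nonneg fun Y _ => mul_self_nonneg _
  have hB : (0:ℚ) ≤ ∑ Y, f Y * f Y := Finset.sum_nonneg fun Y _ => mul_self_nonneg _
  have hzero : ∑ Y, f Y * f Y = 0 := by nlinarith
  intro X
  have := (Finset.sum_eq_zero_iff_of_nonneg (fun Y _ => mul_self_nonneg (f Y))).mp hzero X
    (Finset.mem_univ X)
  exact mul_self_eq_zero.mp this

section Orbits

variable (G : Subgroup (Equiv.Perm (Fin n)))

lemma upMap_invariant (f : Finset (Fin n) → ℚ)
    (hf : ∀ (g : G) (X : Finset (Fin n)), f (g • X) = f X)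
    (g : G) (Z : Finset (Fin n)) : upMap f (g • Z) = upMap f Z := by
  unfold upMap
  rw [Finset.smul_finset_def]
  rw [Finset.sum_image (fun x _ y _ h => MulAction.injective g h)]
  apply Finset.sum_congr rfl
  intro x hx
  rw [← Finset.image_erase (MulAction.injective g), ← Finset.smul_finset_def, hf]

lemma mk_smul (g : G) (X : Finset (Fin n)) :
    (Quotient.mk (MulAction.orbitRel G (Finset (Fin n))) (g • X)) = Quotient.mk _ X :=
  Quotient.sound ⟨g, rfl⟩

lemma invariant_eq_of_mk_eq (f : Finset (Fin n) → ℚ)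
    (hf : ∀ (g : G) (X : Finset (Fin n)), f (g • X) = f X) {X Y : Finset (Fin n)}
    (h : (Quotient.mk (MulAction.orbitRel G (Finset (Fin n))) X) = Quotient.mk _ Y) :
    f X = f Y := by
  obtain ⟨g, hg⟩ := Quotient.exact h
  rw [← hg, hf]

lemma orbitCard_mk (X : Finset (Fin n)) :
    orbitCard n G (Quotient.mk (MulAction.orbitRel G (Finset (Fin n))) X) = X.card := rfl

/-- Extend a function on orbits of `k`-sets to a `G`-invariant function on all finsets. -/
noncomputable def eFun (k : ℕ)
    (c : {q : Quotient (MulAction.orbitRel G (Finset (Fin n))) // orbitCard n G q = k} → ℚ) :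
    Finset (Fin n) → ℚ :=
  fun X => if h : X.card = k then
    c ⟨Quotient.mk _ X, by rw [orbitCard_mk]; exact h⟩ else 0

lemma eFun_invariant (k : ℕ) (c) (g : G) (X : Finset (Fin n)) :
    eFun G k c (g • X) = eFun G k c X := by
  have hcard : (g • X).card = X.card := Finset.card_smul_finset g X
  unfold eFun
  by_cases h : X.card = k
  · rw [dif_pos (hcard.trans h), dif_pos h]
    congr 1
    exact Subtype.ext (mk_smul G g X)
  · rw [dif_neg (fun hh => h (by rw [← hcard]; exact hh)), dif_neg h]

lemma eFun_supp (k : ℕ) (c) (X : Finset (Fin n)) (h : X.card ≠ k) : eFun G k c X = 0 :=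
  dif_neg h

lemma eFun_add (k : ℕ) (c c') (X : Finset (Fin n)) :
    eFun G k (c + c') X = eFun G k c X + eFun G k c' X := by
  unfold eFun
  by_cases h : X.card = k <;> simp [h]

lemma eFun_smul (k : ℕ) (a : ℚ) (c) (X : Finset (Fin n)) :
    eFun G k (a • c) X = a * eFun G k c X := by
  unfold eFun
  by_cases h : X.card = k <;> simp [h]

lemma upMap_supp (k : ℕ) (f : Finset (Fin n) → ℚ)
    (hsupp : ∀ X : Finset (Fin n), X.card ≠ k → f X = 0)
    (Z : Finset (Fin n)) (hZ : Z.card ≠ k + 1) : upMap f Z = 0 := by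
  unfold upMap
  apply Finset.sum_eq_zero
  intro x hx
  apply hsupp
  rw [Finset.card_erase_of_mem hx]
  have : 0 < Z.card := Finset.card_pos.mpr ⟨x, hx⟩
  omega

/-- The comparison map on orbit-function spaces, as a linear map. -/
noncomputable def Phi (k : ℕ) :
    ({q : Quotient (MulAction.orbitRel G (Finset (Fin n))) // orbitCard n G q = k} → ℚ)
      →ₗ[ℚ]
    ({q : Quotient (MulAction.orbitRel G (Finset (Fin n))) // orbitCard n G q = k + 1} → ℚ) where
  toFun c := fun p => upMap (eFun G k c) p.1.out
  map_add' c c' := by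
    funext p
    simp only [upMap, Pi.add_apply]
    rw [← Finset.sum_add_distrib]
    exact Finset.sum_congr rfl fun x _ => eFun_add G k c c' _
  map_smul' a c := by
    funext p
    simp only [upMap, Pi.smul_apply, RingHom.id_apply, smul_eq_mul, Finset.mul_sum]
    exact Finset.sum_congr rfl fun x _ => eFun_smul G k a c _

lemma phi_injective (k : ℕ) (hk : 2 * k < n) : Function.Injective (Phi G k) := by
  rw [← LinearMap.ker_eq_bot, LinearMap.ker_eq_bot']
  intro c hc
  set f := eFun G k c with hf
  have hfi : ∀ (g : G) (X : Finset (Fin n)), f (g • X) = f X := eFun_invariant G k c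
  have hU0 : ∀ Z, upMap f Z = 0 := by
    intro Z
    by_cases hZ : Z.card = k + 1
    · have hmk : (Quotient.mk (MulAction.orbitRel G (Finset (Fin n))) Z)
          = Quotient.mk _ (Quotient.mk (MulAction.orbitRel G (Finset (Fin n))) Z).out := by
        rw [Quotient.out_eq]
      have hinv := invariant_eq_of_mk_eq G (upMap f) (upMap_invariant G f hfi) hmk
      have hp : orbitCard n G (Quotient.mk (MulAction.orbitRel G (Finset (Fin n))) Z)
          = k + 1 := by rw [orbitCard_mk]; exact hZ
      have := congrFun hc (⟨Quotient.mk _ Z, hp⟩ :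
        {q : Quotient (MulAction.orbitRel G (Finset (Fin n))) // orbitCard n G q = k + 1})
      rw [hinv]
      exact this
    · exact upMap_supp k f (eFun_supp G k c) Z hZ
  have hzero : ∀ X, f X = 0 :=
    upMap_injective_on_level hk f (eFun_supp G k c) hU0
  funext q
  have hq : q.1.out.card = k := by
    have h2 := q.2
    conv_lhs at h2 => rw [← Quotient.out_eq q.1]
    exact h2
  have := hzero q.1.out
  rw [hf, eFun, dif_pos hq] at this
  rw [show (⟨Quotient.mk _ q.1.out, by rw [orbitCard_mk]; exact hq⟩ :
      {q : Quotient (MulAction.orbitRel G (Finset (Fin n))) // orbitCard n G q = k})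
      = q from Subtype.ext (Quotient.out_eq q.1)] at this
  exact this

lemma count_le (k : ℕ) (hk : 2 * k < n) :
    tSetOrbitCount n G k ≤ tSetOrbitCount n G (k + 1) := by
  classical
  unfold tSetOrbitCount
  letI : Fintype {q : Quotient (MulAction.orbitRel G (Finset (Fin n))) // orbitCard n G q = k} :=
    Fintype.ofFinite _
  letI : Fintype {q : Quotient (MulAction.orbitRel G (Finset (Fin n))) //
      orbitCard n G q = k + 1} := Fintype.ofFinite _
  rw [Nat.card_eq_fintype_card, Nat.card_eq_fintype_card]
  have := LinearMap.finrank_le_finrank_of_injective (phi_injective G k hk)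
  simpa [Module.finrank_pi] using this

end Orbits

end LWaux

theorem stmt_10 (n t : ℕ) (ht1 : 1 ≤ t) (ht2 : 2 * t ≤ n)
    (G : Subgroup (Equiv.Perm (Fin n))) :
    tSetOrbitCount n G (t - 1) ≤ tSetOrbitCount n G t := by
  have hk : 2 * (t - 1) < n := by omega
  have ht : t - 1 + 1 = t := by omega
  have := LWaux.count_le G (t - 1) hk
  rwa [ht] at this
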